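/- Φ is an exact potential for unilateral deviations: for every player i and every pair of states S, S' that differ only in the coordinates controlled by i (the action a_i and the links {g_{ij} : j ≠ i}), one has u_i(S') − u_i(S) = Φ(S') − Φ(S). -/

import Mathlib

open Finset

variable {n : ℕ}

lemma sum_split (i : Fin n) (f : Fin n → ℝ) :
    ∑ x, f x = f i + ∑ x ∈ univ.erase i, f x :=
  (Finset.add_sum_erase _ f (mem_univ i)).symm

lemma pair_split (i : Fin n) (D : Fin n → Fin n → ℝ)
    (hD : ∀ x y, x ≠ i → y ≠ i → D x y = 0) :
    ∑ x, ∑ y ∈ univ.erase x, D x y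
      = (∑ y ∈ univ.erase i, D i y) + ∑ x ∈ univ.erase i, D x i := by
  rw [sum_split i]
  congr 1
  refine Finset.sum_congr rfl fun x hx => ?_
  have hxi : x ≠ i := Finset.ne_of_mem_erase hx
  refine Finset.sum_eq_single_of_mem i (Finset.mem_erase.2 ⟨fun hh => hxi hh.symm, mem_univ i⟩)
    fun y _ hy => hD x y hxi hy

lemma erase_erase_eq (i x : Fin n) :
    (univ.erase x).erase i = univ.filter (fun y => y ≠ i ∧ y ≠ x) := by
  ext y; simp [Finset.mem_erase, Finset.mem_filter]

lemma triple_split (i : Fin n) (D : Fin n → Fin n → Fin n → ℝ)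
    (hD : ∀ x y z, x ≠ i → y ≠ i → z ≠ i → D x y z = 0) :
    ∑ x, ∑ y ∈ univ.erase x, ∑ z ∈ univ.filter (fun z => z ≠ x ∧ z ≠ y), D x y z
      = (∑ y ∈ univ.erase i, ∑ z ∈ univ.filter (fun z => z ≠ i ∧ z ≠ y), D i y z)
        + (∑ x ∈ univ.erase i, ∑ z ∈ univ.filter (fun z => z ≠ x ∧ z ≠ i), D x i z)
        + ∑ x ∈ univ.erase i, ∑ y ∈ univ.filter (fun y => y ≠ i ∧ y ≠ x), D x y i := by
  rw [sum_split i]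
  have key : ∀ x ∈ univ.erase i,
      ∑ y ∈ univ.erase x, ∑ z ∈ univ.filter (fun z => z ≠ x ∧ z ≠ y), D x y z
        = (∑ z ∈ univ.filter (fun z => z ≠ x ∧ z ≠ i), D x i z)
          + ∑ y ∈ univ.filter (fun y => y ≠ i ∧ y ≠ x), D x y i := by
    intro x hx
    have hxi : x ≠ i := Finset.ne_of_mem_erase hx
    have hix : i ∈ univ.erase x := Finset.mem_erase.2 ⟨fun hh => hxi hh.symm, mem_univ i⟩
    rw [← Finset.add_sum_erase _ _ hix, erase_erase_eq i x]
    congr 1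
    refine Finset.sum_congr rfl fun y hy => ?_
    obtain ⟨hyi, hyx⟩ := (Finset.mem_filter.1 hy).2
    refine Finset.sum_eq_single_of_mem i
      (Finset.mem_filter.2 ⟨mem_univ i, fun hh => hxi hh.symm, fun hh => hyi hh.symm⟩)
      fun z _ hz => hD x y z hxi hyi hz
  rw [Finset.sum_congr rfl key, Finset.sum_add_distrib]
  ring

lemma sym_swap (i : Fin n) (f : Fin n → Fin n → ℝ) :
    ∑ x ∈ univ.erase i, ∑ z ∈ univ.filter (fun z => z ≠ x ∧ z ≠ i), f x z
      = ∑ z ∈ univ.erase i, ∑ x ∈ univ.filter (fun x => x ≠ i ∧ x ≠ z), f x z :=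
  Finset.sum_comm' (by intro x y; simp [Finset.mem_erase, Finset.mem_filter]; tauto)


noncomputable section

/-- A network state: the diagonal entry `S i i` is player `i`'s action status `a_i`,
and the off-diagonal entry `S i j` (for `i ≠ j`) is the link status `g_{ij}`. -/
abbrev NetState (n : ℕ) := Fin n → Fin n → Bool

/-- Numerical (0/1) value of a Boolean coordinate. -/
def bv (x : Bool) : ℝ := if x then 1 else 0

/-- Player `i`'s payoff
`u_i(S) = a_i v_i + h a_i Σ_{j≠i} a_j + φ a_i Σ_{j≠i} g_{ij} g_{ji} a_j
  + Σ_{j≠i} g_{ij} w_{ij} + m Σ_{j≠i} g_{ij} g_{ji}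
  + q Σ_{j,l pairwise distinct from each other and from i} g_{ij} g_{jl} g_{li}`. -/
def payoff (n : ℕ) (v : Fin n → ℝ) (w : Fin n → Fin n → ℝ) (h φ m q : ℝ)
    (S : NetState n) (i : Fin n) : ℝ :=
  bv (S i i) * v i
    + h * bv (S i i) * ∑ j ∈ univ.filter (fun j => j ≠ i), bv (S j j)
    + φ * bv (S i i) * ∑ j ∈ univ.filter (fun j => j ≠ i), bv (S i j) * bv (S j i) * bv (S j j)
    + ∑ j ∈ univ.filter (fun j => j ≠ i), bv (S i j) * w i j
    + m * ∑ j ∈ univ.filter (fun j => j ≠ i), bv (S i j) * bv (S j i)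
    + q * ∑ j ∈ univ.filter (fun j => j ≠ i),
        ∑ l ∈ univ.filter (fun l => l ≠ i ∧ l ≠ j),
          bv (S i j) * bv (S j l) * bv (S l i)

/-- The potential
`Φ(S) = Σ_i a_i v_i + (h/2) Σ_{i≠j} a_i a_j + (φ/2) Σ_{i≠j} a_i a_j g_{ij} g_{ji}
  + Σ_{i≠j} g_{ij} w_{ij} + (m/2) Σ_{i≠j} g_{ij} g_{ji}
  + (q/3) Σ_{i,j,l pairwise distinct} g_{ij} g_{jl} g_{li}`. -/
def potential (n : ℕ) (v : Fin n → ℝ) (w : Fin n → Fin n → ℝ) (h φ m q : ℝ)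
    (S : NetState n) : ℝ :=
  (∑ i, bv (S i i) * v i)
    + (h / 2) * ∑ i, ∑ j ∈ univ.filter (fun j => j ≠ i), bv (S i i) * bv (S j j)
    + (φ / 2) * ∑ i, ∑ j ∈ univ.filter (fun j => j ≠ i),
        bv (S i i) * bv (S j j) * bv (S i j) * bv (S j i)
    + (∑ i, ∑ j ∈ univ.filter (fun j => j ≠ i), bv (S i j) * w i j)
    + (m / 2) * ∑ i, ∑ j ∈ univ.filter (fun j => j ≠ i), bv (S i j) * bv (S j i)
    + (q / 3) * ∑ i, ∑ j ∈ univ.filter (fun j => j ≠ i),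
        ∑ l ∈ univ.filter (fun l => l ≠ i ∧ l ≠ j), bv (S i j) * bv (S j l) * bv (S l i)

/-- **`Φ` is an exact potential for unilateral deviations.** If `S` and `S'` differ only in the
coordinates controlled by player `i` (the action `a_i` and the links `{g_{ij} : j ≠ i}`, i.e.
the `i`-th row), then `u_i(S') − u_i(S) = Φ(S') − Φ(S)`. -/
theorem exact_potential (n : ℕ) (hn : 2 ≤ n) (v : Fin n → ℝ) (w : Fin n → Fin n → ℝ)
    (h φ m q : ℝ) (i : Fin n) (S S' : NetState n)
    (hagree : ∀ x y : Fin n, x ≠ i → S' x y = S x y) :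
    payoff n v w h φ m q S' i - payoff n v w h φ m q S i
      = potential n v w h φ m q S' - potential n v w h φ m q S := by
  have hbv : ∀ x y, x ≠ i → bv (S' x y) = bv (S x y) := fun x y hx => by rw [hagree x y hx]
  -- payoff-side rewrites: entries of S' off row i equal those of S
  have p2 : ∑ j ∈ univ.erase i, bv (S' j j) = ∑ j ∈ univ.erase i, bv (S j j) :=
    Finset.sum_congr rfl fun j hj => hbv j j (Finset.ne_of_mem_erase hj)
  have p3 : ∑ j ∈ univ.erase i, bv (S' i j) * bv (S' j i) * bv (S' j j)
      = ∑ j ∈ univ.erase i, bv (S' i j) * bv (S j i) * bv (S j j) :=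
    Finset.sum_congr rfl fun j hj => by
      rw [hbv j i (Finset.ne_of_mem_erase hj), hbv j j (Finset.ne_of_mem_erase hj)]
  have p5 : ∑ j ∈ univ.erase i, bv (S' i j) * bv (S' j i)
      = ∑ j ∈ univ.erase i, bv (S' i j) * bv (S j i) :=
    Finset.sum_congr rfl fun j hj => by rw [hbv j i (Finset.ne_of_mem_erase hj)]
  have p6 : (∑ j ∈ univ.erase i, ∑ l ∈ univ.filter (fun l => l ≠ i ∧ l ≠ j),
        bv (S' i j) * bv (S' j l) * bv (S' l i))
      = ∑ j ∈ univ.erase i, ∑ l ∈ univ.filter (fun l => l ≠ i ∧ l ≠ j),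
        bv (S' i j) * bv (S j l) * bv (S l i) :=
    Finset.sum_congr rfl fun j hj => Finset.sum_congr rfl fun l hl => by
      rw [hbv j l (Finset.ne_of_mem_erase hj), hbv l i (Finset.mem_filter.1 hl).2.1]
  -- potential-side component differences
  have c1 : (∑ x, bv (S' x x) * v x) - (∑ x, bv (S x x) * v x)
      = bv (S' i i) * v i - bv (S i i) * v i := by
    rw [sum_split i (fun x => bv (S' x x) * v x), sum_split i (fun x => bv (S x x) * v x)]
    have e : ∑ x ∈ univ.erase i, bv (S' x x) * v x = ∑ x ∈ univ.erase i, bv (S x x) * v x :=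
      Finset.sum_congr rfl fun x hx => by rw [hbv x x (Finset.ne_of_mem_erase hx)]
    rw [e]; ring
  have c2 : (∑ x, ∑ y ∈ univ.erase x, bv (S' x x) * bv (S' y y))
        - (∑ x, ∑ y ∈ univ.erase x, bv (S x x) * bv (S y y))
      = 2 * (bv (S' i i) * (∑ j ∈ univ.erase i, bv (S j j))
            - bv (S i i) * ∑ j ∈ univ.erase i, bv (S j j)) := by
    rw [← Finset.sum_sub_distrib]
    simp only [← Finset.sum_sub_distrib]
    rw [pair_split i (fun x y => bv (S' x x) * bv (S' y y) - bv (S x x) * bv (S y y))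
      (fun x y hx hy => by rw [hbv x x hx, hbv y y hy]; ring)]
    have e1 : ∑ y ∈ univ.erase i, (bv (S' i i) * bv (S' y y) - bv (S i i) * bv (S y y))
        = ∑ y ∈ univ.erase i, (bv (S' i i) * bv (S y y) - bv (S i i) * bv (S y y)) :=
      Finset.sum_congr rfl fun y hy => by rw [hbv y y (Finset.ne_of_mem_erase hy)]
    have e2 : ∑ x ∈ univ.erase i, (bv (S' x x) * bv (S' i i) - bv (S x x) * bv (S i i))
        = ∑ x ∈ univ.erase i, (bv (S' i i) * bv (S x x) - bv (S i i) * bv (S x x)) :=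
      Finset.sum_congr rfl fun x hx => by rw [hbv x x (Finset.ne_of_mem_erase hx)]; ring
    rw [e1, e2]
    simp only [Finset.sum_sub_distrib, ← Finset.mul_sum]
    ring
  have c3 : (∑ x, ∑ y ∈ univ.erase x, bv (S' x x) * bv (S' y y) * bv (S' x y) * bv (S' y x))
        - (∑ x, ∑ y ∈ univ.erase x, bv (S x x) * bv (S y y) * bv (S x y) * bv (S y x))
      = 2 * (bv (S' i i) * (∑ j ∈ univ.erase i, bv (S' i j) * bv (S j i) * bv (S j j))
            - bv (S i i) * ∑ j ∈ univ.erase i, bv (S i j) * bv (S j i) * bv (S j j)) := by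
    rw [← Finset.sum_sub_distrib]
    simp only [← Finset.sum_sub_distrib]
    rw [pair_split i
      (fun x y => bv (S' x x) * bv (S' y y) * bv (S' x y) * bv (S' y x)
        - bv (S x x) * bv (S y y) * bv (S x y) * bv (S y x))
      (fun x y hx hy => by rw [hbv x x hx, hbv y y hy, hbv x y hx, hbv y x hy]; ring)]
    have e1 : ∑ y ∈ univ.erase i,
          (bv (S' i i) * bv (S' y y) * bv (S' i y) * bv (S' y i)
            - bv (S i i) * bv (S y y) * bv (S i y) * bv (S y i))
        = ∑ y ∈ univ.erase i,
          (bv (S' i i) * (bv (S' i y) * bv (S y i) * bv (S y y))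
            - bv (S i i) * (bv (S i y) * bv (S y i) * bv (S y y))) :=
      Finset.sum_congr rfl fun y hy => by
        rw [hbv y y (Finset.ne_of_mem_erase hy), hbv y i (Finset.ne_of_mem_erase hy)]; ring
    have e2 : ∑ x ∈ univ.erase i,
          (bv (S' x x) * bv (S' i i) * bv (S' x i) * bv (S' i x)
            - bv (S x x) * bv (S i i) * bv (S x i) * bv (S i x))
        = ∑ x ∈ univ.erase i,
          (bv (S' i i) * (bv (S' i x) * bv (S x i) * bv (S x x))
            - bv (S i i) * (bv (S i x) * bv (S x i) * bv (S x x))) :=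
      Finset.sum_congr rfl fun x hx => by
        rw [hbv x x (Finset.ne_of_mem_erase hx), hbv x i (Finset.ne_of_mem_erase hx)]; ring
    rw [e1, e2]
    simp only [Finset.sum_sub_distrib, ← Finset.mul_sum]
    ring
  have c4 : (∑ x, ∑ y ∈ univ.erase x, bv (S' x y) * w x y)
        - (∑ x, ∑ y ∈ univ.erase x, bv (S x y) * w x y)
      = (∑ j ∈ univ.erase i, bv (S' i j) * w i j)
        - ∑ j ∈ univ.erase i, bv (S i j) * w i j := by
    rw [← Finset.sum_sub_distrib]
    simp only [← Finset.sum_sub_distrib]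
    rw [pair_split i (fun x y => bv (S' x y) * w x y - bv (S x y) * w x y)
      (fun x y hx _ => by rw [hbv x y hx]; ring)]
    have e2 : ∑ x ∈ univ.erase i, (bv (S' x i) * w x i - bv (S x i) * w x i) = 0 :=
      Finset.sum_eq_zero fun x hx => by rw [hbv x i (Finset.ne_of_mem_erase hx)]; ring
    rw [e2, Finset.sum_sub_distrib]
    ring
  have c5 : (∑ x, ∑ y ∈ univ.erase x, bv (S' x y) * bv (S' y x))
        - (∑ x, ∑ y ∈ univ.erase x, bv (S x y) * bv (S y x))
      = 2 * ((∑ j ∈ univ.erase i, bv (S' i j) * bv (S j i))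
            - ∑ j ∈ univ.erase i, bv (S i j) * bv (S j i)) := by
    rw [← Finset.sum_sub_distrib]
    simp only [← Finset.sum_sub_distrib]
    rw [pair_split i (fun x y => bv (S' x y) * bv (S' y x) - bv (S x y) * bv (S y x))
      (fun x y hx hy => by rw [hbv x y hx, hbv y x hy]; ring)]
    have e1 : ∑ y ∈ univ.erase i, (bv (S' i y) * bv (S' y i) - bv (S i y) * bv (S y i))
        = ∑ y ∈ univ.erase i, (bv (S' i y) * bv (S y i) - bv (S i y) * bv (S y i)) :=
      Finset.sum_congr rfl fun y hy => by rw [hbv y i (Finset.ne_of_mem_erase hy)]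
    have e2 : ∑ x ∈ univ.erase i, (bv (S' x i) * bv (S' i x) - bv (S x i) * bv (S i x))
        = ∑ x ∈ univ.erase i, (bv (S' i x) * bv (S x i) - bv (S i x) * bv (S x i)) :=
      Finset.sum_congr rfl fun x hx => by rw [hbv x i (Finset.ne_of_mem_erase hx)]; ring
    rw [e1, e2]
    simp only [Finset.sum_sub_distrib]
    ring
  have c6 : (∑ x, ∑ y ∈ univ.erase x, ∑ z ∈ univ.filter (fun z => z ≠ x ∧ z ≠ y),
          bv (S' x y) * bv (S' y z) * bv (S' z x))
        - (∑ x, ∑ y ∈ univ.erase x, ∑ z ∈ univ.filter (fun z => z ≠ x ∧ z ≠ y),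
          bv (S x y) * bv (S y z) * bv (S z x))
      = 3 * ((∑ j ∈ univ.erase i, ∑ l ∈ univ.filter (fun l => l ≠ i ∧ l ≠ j),
              bv (S' i j) * bv (S j l) * bv (S l i))
            - ∑ j ∈ univ.erase i, ∑ l ∈ univ.filter (fun l => l ≠ i ∧ l ≠ j),
              bv (S i j) * bv (S j l) * bv (S l i)) := by
    rw [← Finset.sum_sub_distrib]
    simp only [← Finset.sum_sub_distrib]
    rw [triple_split i
      (fun x y z => bv (S' x y) * bv (S' y z) * bv (S' z x)
        - bv (S x y) * bv (S y z) * bv (S z x))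
      (fun x y z hx hy hz => by rw [hbv x y hx, hbv y z hy, hbv z x hz]; ring)]
    have e1 : ∑ y ∈ univ.erase i, ∑ z ∈ univ.filter (fun z => z ≠ i ∧ z ≠ y),
          (bv (S' i y) * bv (S' y z) * bv (S' z i) - bv (S i y) * bv (S y z) * bv (S z i))
        = ∑ y ∈ univ.erase i, ∑ z ∈ univ.filter (fun z => z ≠ i ∧ z ≠ y),
          (bv (S' i y) * bv (S y z) * bv (S z i) - bv (S i y) * bv (S y z) * bv (S z i)) :=
      Finset.sum_congr rfl fun y hy => Finset.sum_congr rfl fun z hz => by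
        rw [hbv y z (Finset.ne_of_mem_erase hy), hbv z i (Finset.mem_filter.1 hz).2.1]
    have e2 : ∑ x ∈ univ.erase i, ∑ z ∈ univ.filter (fun z => z ≠ x ∧ z ≠ i),
          (bv (S' x i) * bv (S' i z) * bv (S' z x) - bv (S x i) * bv (S i z) * bv (S z x))
        = ∑ j ∈ univ.erase i, ∑ l ∈ univ.filter (fun l => l ≠ i ∧ l ≠ j),
          (bv (S' i j) * bv (S j l) * bv (S l i) - bv (S i j) * bv (S j l) * bv (S l i)) := by
      rw [sym_swap i]
      refine Finset.sum_congr rfl fun j hj => Finset.sum_congr rfl fun l hl => ?_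
      have hli : l ≠ i := (Finset.mem_filter.1 hl).2.1
      have hji : j ≠ i := Finset.ne_of_mem_erase hj
      rw [hbv l i hli, hbv j l hji]; ring
    have e3 : ∑ x ∈ univ.erase i, ∑ y ∈ univ.filter (fun y => y ≠ i ∧ y ≠ x),
          (bv (S' x y) * bv (S' y i) * bv (S' i x) - bv (S x y) * bv (S y i) * bv (S i x))
        = ∑ j ∈ univ.erase i, ∑ l ∈ univ.filter (fun l => l ≠ i ∧ l ≠ j),
          (bv (S' i j) * bv (S j l) * bv (S l i) - bv (S i j) * bv (S j l) * bv (S l i)) := by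
      refine Finset.sum_congr rfl fun j hj => Finset.sum_congr rfl fun l hl => ?_
      have hji : j ≠ i := Finset.ne_of_mem_erase hj
      have hli : l ≠ i := (Finset.mem_filter.1 hl).2.1
      rw [hbv j l hji, hbv l i hli]; ring
    rw [e1, e2, e3]
    simp only [Finset.sum_sub_distrib]
    ring
  unfold payoff potential
  simp only [Finset.filter_ne']
  rw [p2, p3, p5, p6]
  linear_combination -(c1 + (h/2)*c2 + (φ/2)*c3 + c4 + (m/2)*c5 + (q/3)*c6)
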